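/- Fix η ∈ (2/3, √3−1] and the trine directions n₁, n₂, n₃ in the ZX plane. Consider all choices of (α_{12}, a_{12}), (α_{13}, a_{13}), (α_{23}, a_{23}) ∈ ℝ × ℝ³ such that for each pair (ij) the four matrices of the parametric joint-measurement family with parameters (α_{ij}, a_{ij}) are qubit effects. Over all such choices, the quantity 2η + |a_{12} + a_{13} + a_{23}| − (α_{12} + α_{13} + α_{23}) attains its maximum value C(η) = 2η + 3(√(1 + η⁴/4 − 2η²) − (1 − η²/2)), and the maximum is attained at α_{ij} = 1 − η²/2 and a_{ij} = (0, √(1 + η⁴/4 − 2η²), 0) for all three pairs. -/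

import Mathlib

open Matrix ComplexOrder

noncomputable section

abbrev Mat2 := Matrix (Fin 2) (Fin 2) ℂ

/-- Pauli matrix σ₁. -/
def σ1 : Mat2 := !![0, 1; 1, 0]
/-- Pauli matrix σ₂. -/
def σ2 : Mat2 := !![0, -Complex.I; Complex.I, 0]
/-- Pauli matrix σ₃. -/
def σ3 : Mat2 := !![1, 0; 0, -1]

/-- σ·a for a real 3-vector a. -/
def pauli (a : Fin 3 → ℝ) : Mat2 := (a 0 : ℂ) • σ1 + (a 1 : ℂ) • σ2 + (a 2 : ℂ) • σ3

/-- Euclidean inner product on ℝ³. -/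
def dot3 (a b : Fin 3 → ℝ) : ℝ := a 0 * b 0 + a 1 * b 1 + a 2 * b 2

/-- Euclidean norm on ℝ³. -/
def norm3 (a : Fin 3 → ℝ) : ℝ := Real.sqrt (dot3 a a)

/-- A qubit effect: both `E` and `I - E` positive semidefinite. -/
def IsEffect (E : Mat2) : Prop := E.PosSemidef ∧ (1 - E).PosSemidef

/-- A qubit density matrix. -/
def IsDensity (ρ : Mat2) : Prop := ρ.PosSemidef ∧ ρ.trace = 1

/-- E₊ = (1/2)(I + η σ·n). -/
def Epos (η : ℝ) (n : Fin 3 → ℝ) : Mat2 := (1/2 : ℂ) • (1 + (η : ℂ) • pauli n)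
/-- E₋ = (1/2)(I - η σ·n). -/
def Eneg (η : ℝ) (n : Fin 3 → ℝ) : Mat2 := (1/2 : ℂ) • (1 - (η : ℂ) • pauli n)

/-- A pairwise joint measurement of the noisy spin-1/2 observables along nᵢ and nⱼ. -/
def IsJointMmt (η : ℝ) (ni nj : Fin 3 → ℝ) (Gpp Gpm Gmp Gmm : Mat2) : Prop :=
  IsEffect Gpp ∧ IsEffect Gpm ∧ IsEffect Gmp ∧ IsEffect Gmm ∧
  Gpp + Gpm = Epos η ni ∧ Gmp + Gmm = Eneg η ni ∧
  Gpp + Gmp = Epos η nj ∧ Gpm + Gmm = Eneg η nj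

/-- Average anticorrelation probability R₃(ρ), given the anticorrelation effects of the
three pairwise joint measurements. -/
def R3 (ρ G12pm G12mp G13pm G13mp G23pm G23mp : Mat2) : ℝ :=
  (1/3) * ((ρ * (G12pm + G12mp)).trace.re + (ρ * (G13pm + G13mp)).trace.re +
    (ρ * (G23pm + G23mp)).trace.re)

/-- Parametric joint-measurement family. -/
def Gpp (η : ℝ) (ni nj : Fin 3 → ℝ) (α : ℝ) (a : Fin 3 → ℝ) : Mat2 :=
  (1/2 : ℂ) • (((α/2 : ℝ) : ℂ) • (1 : Mat2) + pauli ((1/2 : ℝ) • (η • (ni + nj) - a)))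
def Gpm (η : ℝ) (ni nj : Fin 3 → ℝ) (α : ℝ) (a : Fin 3 → ℝ) : Mat2 :=
  (1/2 : ℂ) • (((1 - α/2 : ℝ) : ℂ) • (1 : Mat2) + pauli ((1/2 : ℝ) • (η • (ni - nj) + a)))
def Gmp (η : ℝ) (ni nj : Fin 3 → ℝ) (α : ℝ) (a : Fin 3 → ℝ) : Mat2 :=
  (1/2 : ℂ) • (((1 - α/2 : ℝ) : ℂ) • (1 : Mat2) + pauli ((1/2 : ℝ) • (-(η • ni) + η • nj + a)))
def Gmm (η : ℝ) (ni nj : Fin 3 → ℝ) (α : ℝ) (a : Fin 3 → ℝ) : Mat2 :=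
  (1/2 : ℂ) • (((α/2 : ℝ) : ℂ) • (1 : Mat2) + pauli ((1/2 : ℝ) • (-(η • (ni + nj)) - a)))

/-- Trine directions in the ZX plane. -/
def tn1 : Fin 3 → ℝ := ![0, 0, 1]
def tn2 : Fin 3 → ℝ := ![Real.sqrt 3 / 2, 0, -(1/2)]
def tn3 : Fin 3 → ℝ := ![-(Real.sqrt 3 / 2), 0, -(1/2)]

/-- sign of a Boolean, as ±1. -/
def sgn (b : Bool) : ℝ := if b then 1 else -1

/-- m_X = Σₖ Xₖ nₖ. -/
def mvec {N : ℕ} (n : Fin N → Fin 3 → ℝ) (X : Fin N → Bool) : Fin 3 → ℝ :=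
  ∑ k, sgn (X k) • n k

/-- Joint measurability of the N noisy qubit observables. -/
def JointlyMeasurable {N : ℕ} (η : ℝ) (n : Fin N → Fin 3 → ℝ) : Prop :=
  ∃ E : (Fin N → Bool) → Mat2,
    (∀ X, IsEffect (E X)) ∧ (∑ X, E X) = 1 ∧
    (∀ k, ∑ X ∈ Finset.univ.filter (fun X => X k = true), E X = Epos η (n k)) ∧
    (∀ k, ∑ X ∈ Finset.univ.filter (fun X => X k = false), E X = Eneg η (n k))


/-- a(η) = (0, √(1 + η⁴/4 - 2η²), 0). -/
def aopt (η : ℝ) : Fin 3 → ℝ := ![0, Real.sqrt (1 + η^4/4 - 2*η^2), 0]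

/-- α(η) = 1 - η²/2. -/
def αopt (η : ℝ) : ℝ := 1 - η^2/2

/-- C(η) = 2η + 3(√(1 + η⁴/4 - 2η²) - (1 - η²/2)). -/
def Cfun (η : ℝ) : ℝ := 2*η + 3*(Real.sqrt (1 + η^4/4 - 2*η^2) - (1 - η^2/2))


/-- All four members of the parametric joint-measurement family are qubit effects. -/
def FamEffects (η : ℝ) (ni nj : Fin 3 → ℝ) (α : ℝ) (a : Fin 3 → ℝ) : Prop :=
  IsEffect (Gpp η ni nj α a) ∧ IsEffect (Gpm η ni nj α a) ∧
  IsEffect (Gmp η ni nj α a) ∧ IsEffect (Gmm η ni nj α a)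

/-! ### Auxiliary lemmas -/

lemma quad_nonneg' (a b cr ci p q u w : ℝ) (ha : 0 ≤ a) (hb : 0 ≤ b)
    (hk : cr^2 + ci^2 ≤ a*b) :
    0 ≤ a*(p^2+q^2) + b*(u^2+w^2) + 2*(cr*(p*u+q*w) - ci*(p*w-q*u)) := by
  rcases eq_or_lt_of_le ha with ha0 | ha0
  · have hc1 : cr = 0 := by nlinarith
    have hc2 : ci = 0 := by nlinarith
    rw [← ha0, hc1, hc2]
    nlinarith [sq_nonneg u, sq_nonneg w]
  · nlinarith [sq_nonneg (a*p + cr*u - ci*w), sq_nonneg (a*q + cr*w + ci*u),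
      mul_nonneg (sub_nonneg.2 hk) (add_nonneg (sq_nonneg u) (sq_nonneg w))]

lemma psd2_iff (a b : ℝ) (c : ℂ) :
    (!![(a:ℂ), c; (starRingEnd ℂ) c, (b:ℂ)] : Mat2).PosSemidef ↔
      0 ≤ a ∧ 0 ≤ b ∧ Complex.normSq c ≤ a * b := by
  constructor
  · rintro ⟨hH, hQ⟩
    have key : ∀ x0 x1 : ℂ, (0:ℂ) ≤ (starRingEnd ℂ) x0 * ((a:ℂ) * x0 + c * x1)
        + (starRingEnd ℂ) x1 * ((starRingEnd ℂ) c * x0 + (b:ℂ) * x1) := by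
      intro x0 x1
      have := (posSemidef_iff_dotProduct_mulVec.mp ⟨hH, hQ⟩).2 ![x0, x1]
      simpa [dotProduct, mulVec, Fin.sum_univ_two, mul_comm] using this
    have ha : 0 ≤ a := by
      have := key 1 0
      simp at this
      exact_mod_cast Complex.zero_le_real.mp (by simpa using this)
    have hb : 0 ≤ b := by
      have := key 0 1
      simp at this
      exact_mod_cast Complex.zero_le_real.mp (by simpa using this)
    refine ⟨ha, hb, ?_⟩
    have h3 : 0 ≤ b * (a * b - Complex.normSq c) := by
      have := key (b:ℂ) (-(starRingEnd ℂ) c)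
      have h' : (0:ℂ) ≤ ((b * (a*b - Complex.normSq c) : ℝ) : ℂ) := by
        convert this using 1
        push_cast
        rw [Complex.normSq_eq_conj_mul_self]
        simp only [Complex.conj_ofReal, map_neg, _root_.map_mul, _root_.map_one]
        ring
      exact Complex.zero_le_real.mp h'
    have h4 : 0 ≤ a * (a * b - Complex.normSq c) := by
      have := key (-c) (a:ℂ)
      have h' : (0:ℂ) ≤ ((a * (a*b - Complex.normSq c) : ℝ) : ℂ) := by
        convert this using 1
        push_cast
        rw [Complex.normSq_eq_conj_mul_self]
        simp only [Complex.conj_ofReal, map_neg, _root_.map_mul, _root_.map_one]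
        ring
      exact Complex.zero_le_real.mp h'
    have h5 : 0 ≤ a * Complex.normSq c + b - 2 * Complex.normSq c := by
      have := key (-c) 1
      have h' : (0:ℂ) ≤ ((a * Complex.normSq c + b - 2 * Complex.normSq c : ℝ) : ℂ) := by
        convert this using 1
        push_cast
        rw [Complex.normSq_eq_conj_mul_self]
        simp only [Complex.conj_ofReal, map_neg, _root_.map_mul, _root_.map_one]
        ring
      exact Complex.zero_le_real.mp h'
    have h6 : 0 ≤ Complex.normSq c := Complex.normSq_nonneg c
    rcases eq_or_lt_of_le hb with hb0 | hb0
    · rcases eq_or_lt_of_le ha with ha0 | ha0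
      · nlinarith
      · nlinarith
    · nlinarith
  · rintro ⟨ha, hb, hk⟩
    rw [posSemidef_iff_dotProduct_mulVec]
    constructor
    · ext i j
      fin_cases i <;> fin_cases j <;>
        simp [Matrix.conjTranspose_apply, Complex.ext_iff]
    · intro x
      have hexp : dotProduct (star x) ((!![(a:ℂ), c; (starRingEnd ℂ) c, (b:ℂ)] : Mat2) *ᵥ x)
          = (starRingEnd ℂ) (x 0) * ((a:ℂ) * x 0 + c * x 1)
            + (starRingEnd ℂ) (x 1) * ((starRingEnd ℂ) c * x 0 + (b:ℂ) * x 1) := by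
        simp [dotProduct, mulVec, Fin.sum_univ_two, mul_comm]
      rw [hexp, Complex.le_def]
      have hkk : c.re^2 + c.im^2 ≤ a * b := by
        have h' : Complex.normSq c = c.re^2 + c.im^2 := by simp [Complex.normSq_apply, sq]
        linarith [h' ▸ hk]
      have key := quad_nonneg' a b c.re c.im (x 0).re (x 0).im (x 1).re (x 1).im ha hb hkk
      constructor
      · simp only [Complex.add_re, Complex.mul_re, Complex.add_im, Complex.mul_im,
          Complex.conj_re, Complex.conj_im, Complex.ofReal_re, Complex.ofReal_im,
          Complex.zero_re]
        nlinarith [key]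
      · simp only [Complex.add_re, Complex.mul_re, Complex.add_im, Complex.mul_im,
          Complex.conj_re, Complex.conj_im, Complex.ofReal_re, Complex.ofReal_im,
          Complex.zero_im]
        ring

lemma hmat_eq (β : ℝ) (v : Fin 3 → ℝ) :
    (1/2 : ℂ) • (((β:ℝ):ℂ) • (1 : Mat2) + pauli v) =
    !![((((β + v 2)/2 : ℝ)):ℂ), ((v 0 : ℂ) - (v 1 : ℂ) * Complex.I)/2;
       (starRingEnd ℂ) (((v 0 : ℂ) - (v 1 : ℂ) * Complex.I)/2), ((((β - v 2)/2 : ℝ)):ℂ)] := by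
  ext i j
  fin_cases i <;> fin_cases j <;>
    simp [pauli, σ1, σ2, σ3, Matrix.one_apply, map_div₀, Complex.ext_iff] <;>
    ring_nf <;> simp

lemma psd_iff (β : ℝ) (v : Fin 3 → ℝ) :
    ((1/2 : ℂ) • (((β:ℝ):ℂ) • (1 : Mat2) + pauli v)).PosSemidef ↔
      0 ≤ β ∧ dot3 v v ≤ β^2 := by
  rw [hmat_eq, psd2_iff]
  have hns : Complex.normSq (((v 0 : ℂ) - (v 1 : ℂ) * Complex.I)/2)
      = (v 0 ^ 2 + v 1 ^ 2)/4 := by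
    simp [Complex.normSq_apply]
    ring
  rw [hns]
  unfold dot3
  constructor
  · rintro ⟨h1, h2, h3⟩
    constructor
    · linarith
    · nlinarith
  · rintro ⟨h1, h2⟩
    have hv2 : v 2 ^ 2 ≤ β ^ 2 := by nlinarith [sq_nonneg (v 0), sq_nonneg (v 1)]
    have habs : |v 2| ≤ β := by
      rw [abs_le]; constructor <;> nlinarith [abs_nonneg (v 2), sq_abs (v 2)]
    refine ⟨by cases abs_le.mp habs; linarith, by cases abs_le.mp habs; linarith, by nlinarith⟩

lemma one_sub_hmat (β : ℝ) (v : Fin 3 → ℝ) :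
    (1 : Mat2) - (1/2 : ℂ) • (((β:ℝ):ℂ) • (1 : Mat2) + pauli v)
      = (1/2 : ℂ) • ((((2 - β : ℝ)):ℂ) • (1 : Mat2) + pauli (-v)) := by
  ext i j
  fin_cases i <;> fin_cases j <;>
    simp [pauli, σ1, σ2, σ3, Matrix.one_apply, Complex.ext_iff] <;> ring_nf <;> simp

lemma isEffect_iff (β : ℝ) (v : Fin 3 → ℝ) :
    IsEffect ((1/2 : ℂ) • (((β:ℝ):ℂ) • (1 : Mat2) + pauli v)) ↔
      (0 ≤ β ∧ β ≤ 2 ∧ dot3 v v ≤ β^2 ∧ dot3 v v ≤ (2-β)^2) := by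
  unfold IsEffect
  rw [one_sub_hmat, psd_iff, psd_iff]
  have hd : dot3 (-v) (-v) = dot3 v v := by unfold dot3; simp
  rw [hd]
  constructor
  · rintro ⟨⟨h1, h2⟩, h3, h4⟩
    exact ⟨h1, by linarith, h2, h4⟩
  · rintro ⟨h1, h2, h3, h4⟩
    exact ⟨⟨h1, h3⟩, by linarith, h4⟩

lemma dot3_nonneg (a : Fin 3 → ℝ) : 0 ≤ dot3 a a := by
  unfold dot3; nlinarith [sq_nonneg (a 0), sq_nonneg (a 1), sq_nonneg (a 2)]

lemma norm3_nonneg (a : Fin 3 → ℝ) : 0 ≤ norm3 a := Real.sqrt_nonneg _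

lemma norm3_sq (a : Fin 3 → ℝ) : norm3 a ^ 2 = dot3 a a := Real.sq_sqrt (dot3_nonneg a)

lemma norm3_le_iff (a : Fin 3 → ℝ) (c : ℝ) : norm3 a ≤ c ↔ 0 ≤ c ∧ dot3 a a ≤ c^2 := by
  constructor
  · intro h
    have h0 := norm3_nonneg a
    refine ⟨by linarith, ?_⟩
    nlinarith [norm3_sq a]
  · rintro ⟨h1, h2⟩
    have : norm3 a ≤ Real.sqrt (c^2) := Real.sqrt_le_sqrt h2
    rwa [Real.sqrt_sq h1] at this

lemma cauchy3 (a b : Fin 3 → ℝ) : dot3 a b ^ 2 ≤ dot3 a a * dot3 b b := by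
  unfold dot3
  nlinarith [sq_nonneg (a 0 * b 1 - a 1 * b 0), sq_nonneg (a 0 * b 2 - a 2 * b 0),
    sq_nonneg (a 1 * b 2 - a 2 * b 1)]

lemma norm3_add_le (a b : Fin 3 → ℝ) : norm3 (a + b) ≤ norm3 a + norm3 b := by
  rw [norm3_le_iff]
  refine ⟨add_nonneg (norm3_nonneg a) (norm3_nonneg b), ?_⟩
  have hab : dot3 a b ≤ norm3 a * norm3 b := by
    have h1 : dot3 a b ≤ |dot3 a b| := le_abs_self _
    have h2 : |dot3 a b| ^ 2 ≤ (norm3 a * norm3 b) ^ 2 := by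
      rw [sq_abs, mul_pow, norm3_sq, norm3_sq]; exact cauchy3 a b
    nlinarith [abs_nonneg (dot3 a b), mul_nonneg (norm3_nonneg a) (norm3_nonneg b)]
  have hexp : dot3 (a+b) (a+b) = dot3 a a + 2 * dot3 a b + dot3 b b := by
    unfold dot3; simp [Pi.add_apply]; ring
  rw [hexp]
  nlinarith [norm3_sq a, norm3_sq b]

set_option maxHeartbeats 1000000 in
lemma famEffects_iff (η α : ℝ) (ni nj a : Fin 3 → ℝ)
    (hni : dot3 ni ni = 1) (hnj : dot3 nj nj = 1) (hij : dot3 ni nj = -(1/2)) :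
    FamEffects η ni nj α a ↔
      (0 ≤ α ∧ α ≤ 2 ∧
       η^2 - 2*η*(dot3 ni a + dot3 nj a) + dot3 a a ≤ α^2 ∧
       η^2 + 2*η*(dot3 ni a + dot3 nj a) + dot3 a a ≤ α^2 ∧
       3*η^2 + 2*η*(dot3 ni a - dot3 nj a) + dot3 a a ≤ (2-α)^2 ∧
       3*η^2 - 2*η*(dot3 ni a - dot3 nj a) + dot3 a a ≤ (2-α)^2) := by
  unfold FamEffects Gpp Gpm Gmp Gmm
  rw [isEffect_iff, isEffect_iff, isEffect_iff, isEffect_iff]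
  have e1 : dot3 ((1/2 : ℝ) • (η • (ni + nj) - a)) ((1/2 : ℝ) • (η • (ni + nj) - a))
      = (η^2 - 2*η*(dot3 ni a + dot3 nj a) + dot3 a a)/4 := by
    simp only [dot3, Pi.smul_apply, Pi.add_apply, Pi.sub_apply, smul_eq_mul] at hni hnj hij ⊢
    linear_combination (η^2/4) * hni + (η^2/4) * hnj + (η^2/2) * hij
  have e2 : dot3 ((1/2 : ℝ) • (η • (ni - nj) + a)) ((1/2 : ℝ) • (η • (ni - nj) + a))
      = (3*η^2 + 2*η*(dot3 ni a - dot3 nj a) + dot3 a a)/4 := by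
    simp only [dot3, Pi.smul_apply, Pi.add_apply, Pi.sub_apply, smul_eq_mul] at hni hnj hij ⊢
    linear_combination (η^2/4) * hni + (η^2/4) * hnj - (η^2/2) * hij
  have e3 : dot3 ((1/2 : ℝ) • (-(η • ni) + η • nj + a)) ((1/2 : ℝ) • (-(η • ni) + η • nj + a))
      = (3*η^2 - 2*η*(dot3 ni a - dot3 nj a) + dot3 a a)/4 := by
    simp only [dot3, Pi.smul_apply, Pi.add_apply, Pi.neg_apply, smul_eq_mul] at hni hnj hij ⊢
    linear_combination (η^2/4) * hni + (η^2/4) * hnj - (η^2/2) * hij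
  have e4 : dot3 ((1/2 : ℝ) • (-(η • (ni + nj)) - a)) ((1/2 : ℝ) • (-(η • (ni + nj)) - a))
      = (η^2 + 2*η*(dot3 ni a + dot3 nj a) + dot3 a a)/4 := by
    simp only [dot3, Pi.smul_apply, Pi.add_apply, Pi.sub_apply, Pi.neg_apply,
      smul_eq_mul] at hni hnj hij ⊢
    linear_combination (η^2/4) * hni + (η^2/4) * hnj + (η^2/2) * hij
  rw [e1, e2, e3, e4]
  constructor
  · rintro ⟨⟨g1, g2, g3, g4⟩, ⟨g5, g6, g7, g8⟩, ⟨g9, g10, g11, g12⟩, ⟨g13, g14, g15, g16⟩⟩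
    refine ⟨by linarith, by linarith, by nlinarith [g3], by nlinarith [g15],
      by nlinarith [g7], by nlinarith [g11]⟩
  · rintro ⟨g1, g2, g3, g4, g5, g6⟩
    refine ⟨⟨by linarith, by linarith, by nlinarith [g3], by nlinarith [g3]⟩,
      ⟨by linarith, by linarith, by nlinarith [g5], by nlinarith [g5]⟩,
      ⟨by linarith, by linarith, by nlinarith [g6], by nlinarith [g6]⟩,
      ⟨by linarith, by linarith, by nlinarith [g4], by nlinarith [g4]⟩⟩

set_option maxHeartbeats 1000000 in
lemma pair_bound (η α : ℝ) (a : Fin 3 → ℝ) (hη1 : 0 < η) (hη2 : η ≤ Real.sqrt 3 - 1)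
    (h0 : 0 ≤ α) (h2 : α ≤ 2)
    (hsum : η^2 + dot3 a a ≤ α^2) (hdiff : 3*η^2 + dot3 a a ≤ (2-α)^2) :
    norm3 a - α ≤ Real.sqrt (1 + η^4/4 - 2*η^2) - (1 - η^2/2) := by
  have h3 : Real.sqrt 3 ^ 2 = 3 := Real.sq_sqrt (by norm_num)
  have hsq3 : η + 1 ≤ Real.sqrt 3 := by linarith
  have hη3 : (η+1)^2 ≤ 3 := by nlinarith [Real.sqrt_nonneg 3]
  have hηs : η ≤ 1 - η^2/2 := by nlinarith
  have hT : 0 ≤ 1 + η^4/4 - 2*η^2 := by nlinarith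
  set t := norm3 a with hdeft
  have ht2 : t^2 = dot3 a a := norm3_sq a
  have ht0 : 0 ≤ t := norm3_nonneg a
  set t0 := Real.sqrt (1 + η^4/4 - 2*η^2) with hdeft0
  have hto2 : t0^2 = 1 + η^4/4 - 2*η^2 := Real.sq_sqrt hT
  have hto0 : 0 ≤ t0 := Real.sqrt_nonneg _
  have h2a : 0 ≤ 2 - α := by linarith
  have hd0 : 0 ≤ dot3 a a := dot3_nonneg a
  -- step A : t² ≤ to²
  have hprod : (η^2 + dot3 a a) * (3*η^2 + dot3 a a) ≤ α^2 * (2-α)^2 :=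
    mul_le_mul hsum hdiff (by nlinarith) (sq_nonneg α)
  have h2ab : 2*(α*(2-α)) ≤ 4 - (η^2 + dot3 a a) - (3*η^2 + dot3 a a) := by nlinarith
  have hab0 : 0 ≤ α*(2-α) := mul_nonneg h0 h2a
  have hA : t^2 ≤ t0^2 := by nlinarith [sq_nonneg (4 - 4*η^2 - 2*dot3 a a)]
  have htto : t ≤ t0 := le_of_pow_le_pow_left₀ two_ne_zero hto0 hA
  -- step B
  have hs0 : 0 ≤ 1 - η^2/2 := by nlinarith
  have htos : t0 ≤ 1 - η^2/2 := by nlinarith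
  have hgoal2 : (t - t0 + (1 - η^2/2))^2 ≤ α^2 := by
    nlinarith [mul_nonneg (by linarith : (0:ℝ) ≤ 1 - η^2/2 - t0) (by linarith : (0:ℝ) ≤ t0 - t)]
  have := le_of_pow_le_pow_left₀ two_ne_zero h0 hgoal2
  linarith

lemma dot3_tn11 : dot3 tn1 tn1 = 1 := by simp [dot3, tn1]
lemma dot3_tn22 : dot3 tn2 tn2 = 1 := by
  have h3 : Real.sqrt 3 * Real.sqrt 3 = 3 := Real.mul_self_sqrt (by norm_num)
  simp [dot3, tn2]; nlinarith
lemma dot3_tn33 : dot3 tn3 tn3 = 1 := by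
  have h3 : Real.sqrt 3 * Real.sqrt 3 = 3 := Real.mul_self_sqrt (by norm_num)
  simp [dot3, tn3]; nlinarith
lemma dot3_tn12 : dot3 tn1 tn2 = -(1/2) := by simp [dot3, tn1, tn2]
lemma dot3_tn13 : dot3 tn1 tn3 = -(1/2) := by simp [dot3, tn1, tn3]
lemma dot3_tn23 : dot3 tn2 tn3 = -(1/2) := by
  have h3 : Real.sqrt 3 * Real.sqrt 3 = 3 := Real.mul_self_sqrt (by norm_num)
  simp [dot3, tn2, tn3]; nlinarith

lemma dot3_tn1_aopt (η : ℝ) : dot3 tn1 (aopt η) = 0 := by simp [dot3, tn1, aopt]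
lemma dot3_tn2_aopt (η : ℝ) : dot3 tn2 (aopt η) = 0 := by simp [dot3, tn2, aopt]
lemma dot3_tn3_aopt (η : ℝ) : dot3 tn3 (aopt η) = 0 := by simp [dot3, tn3, aopt]


set_option maxHeartbeats 2000000 in
/-- For trine axes and η ∈ (2/3, √3 - 1], over all valid parameters
(α₁₂,a₁₂), (α₁₃,a₁₃), (α₂₃,a₂₃), the quantity 2η + |a₁₂+a₁₃+a₂₃| - (α₁₂+α₁₃+α₂₃)
attains its maximum C(η), at αᵢⱼ = 1 - η²/2 and aᵢⱼ = (0, √(1 + η⁴/4 - 2η²), 0). -/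
theorem optimal_violation_trine (η : ℝ) (hη : η ∈ Set.Ioc (2/3 : ℝ) (Real.sqrt 3 - 1)) :
    (∀ (α12 α13 α23 : ℝ) (a12 a13 a23 : Fin 3 → ℝ),
      FamEffects η tn1 tn2 α12 a12 → FamEffects η tn1 tn3 α13 a13 →
      FamEffects η tn2 tn3 α23 a23 →
      2*η + norm3 (a12 + a13 + a23) - (α12 + α13 + α23) ≤ Cfun η) ∧
    FamEffects η tn1 tn2 (αopt η) (aopt η) ∧
    FamEffects η tn1 tn3 (αopt η) (aopt η) ∧
    FamEffects η tn2 tn3 (αopt η) (aopt η) ∧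
    2*η + norm3 (aopt η + aopt η + aopt η) - (αopt η + αopt η + αopt η) = Cfun η := by
  obtain ⟨hη1, hη2⟩ := hη
  have hη0 : 0 < η := by linarith
  have h3 : Real.sqrt 3 ^ 2 = 3 := Real.sq_sqrt (by norm_num)
  have hsq3 : η + 1 ≤ Real.sqrt 3 := by linarith
  have hη3 : (η+1)^2 ≤ 3 := by nlinarith [Real.sqrt_nonneg 3]
  have hηs : η ≤ 1 - η^2/2 := by nlinarith
  have hT : 0 ≤ 1 + η^4/4 - 2*η^2 := by nlinarith
  have hto2 : Real.sqrt (1 + η^4/4 - 2*η^2)^2 = 1 + η^4/4 - 2*η^2 := Real.sq_sqrt hT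
  have hto0 : 0 ≤ Real.sqrt (1 + η^4/4 - 2*η^2) := Real.sqrt_nonneg _
  have hdaopt : dot3 (aopt η) (aopt η) = 1 + η^4/4 - 2*η^2 := by
    simp [dot3, aopt]
    nlinarith [hto2]
  constructor
  · intro α12 α13 α23 a12 a13 a23 hF12 hF13 hF23
    rw [famEffects_iff η α12 tn1 tn2 a12 dot3_tn11 dot3_tn22 dot3_tn12] at hF12
    rw [famEffects_iff η α13 tn1 tn3 a13 dot3_tn11 dot3_tn33 dot3_tn13] at hF13
    rw [famEffects_iff η α23 tn2 tn3 a23 dot3_tn22 dot3_tn33 dot3_tn23] at hF23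
    obtain ⟨h120, h122, h12a, h12b, h12c, h12d⟩ := hF12
    obtain ⟨h130, h132, h13a, h13b, h13c, h13d⟩ := hF13
    obtain ⟨h230, h232, h23a, h23b, h23c, h23d⟩ := hF23
    have b12 := pair_bound η α12 a12 hη0 hη2 h120 h122 (by linarith) (by linarith)
    have b13 := pair_bound η α13 a13 hη0 hη2 h130 h132 (by linarith) (by linarith)
    have b23 := pair_bound η α23 a23 hη0 hη2 h230 h232 (by linarith) (by linarith)
    have htri : norm3 (a12 + a13 + a23) ≤ norm3 a12 + norm3 a13 + norm3 a23 := by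
      calc norm3 (a12 + a13 + a23) ≤ norm3 (a12 + a13) + norm3 a23 := norm3_add_le _ _
        _ ≤ norm3 a12 + norm3 a13 + norm3 a23 := by linarith [norm3_add_le a12 a13]
    unfold Cfun
    linarith
  have hfam : ∀ ni nj : Fin 3 → ℝ, dot3 ni ni = 1 → dot3 nj nj = 1 → dot3 ni nj = -(1/2) →
      dot3 ni (aopt η) = 0 → dot3 nj (aopt η) = 0 →
      FamEffects η ni nj (αopt η) (aopt η) := by
    intro ni nj hni hnj hij hpa hqa
    rw [famEffects_iff η (αopt η) ni nj (aopt η) hni hnj hij, hpa, hqa, hdaopt]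
    unfold αopt
    refine ⟨by nlinarith, by nlinarith, by nlinarith, by nlinarith, by nlinarith, by nlinarith⟩
  refine ⟨hfam tn1 tn2 dot3_tn11 dot3_tn22 dot3_tn12 (dot3_tn1_aopt η) (dot3_tn2_aopt η),
    hfam tn1 tn3 dot3_tn11 dot3_tn33 dot3_tn13 (dot3_tn1_aopt η) (dot3_tn3_aopt η),
    hfam tn2 tn3 dot3_tn22 dot3_tn33 dot3_tn23 (dot3_tn2_aopt η) (dot3_tn3_aopt η), ?_⟩
  have hd3 : dot3 (aopt η + aopt η + aopt η) (aopt η + aopt η + aopt η)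
      = 9 * (1 + η^4/4 - 2*η^2) := by
    simp only [dot3, Pi.add_apply] at hdaopt ⊢
    linear_combination 9 * hdaopt
  have hn3 : norm3 (aopt η + aopt η + aopt η) = 3 * Real.sqrt (1 + η^4/4 - 2*η^2) := by
    unfold norm3
    rw [hd3]
    rw [show (9 : ℝ) * (1 + η^4/4 - 2*η^2) = (3 * Real.sqrt (1 + η^4/4 - 2*η^2))^2 by
      nlinarith [hto2]]
    exact Real.sqrt_sq (by positivity)
  rw [hn3]
  unfold Cfun αopt
  ring

end
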